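/- arXiv:2408.04375 — 2 statements merged into one kernel-verified Lean document; each statement's English description precedes it below -/
import Mathlib

section
/- For integers $0 \le t \le k-1$ and real $x>1$, the function $Q_{k,t}(x) := \int_{-\infty}^\infty \frac{2^{2t}\,dw}{(x+\sqrt{x^2-1}\cosh w)^{k-t}(x+1+\sqrt{x^2-1}\,e^w)^{2t}}$ satisfies $Q_{k,t}(x) = 2^{-k+t+1}\int_{-1}^1 \frac{(1+u)^{k-t-1}(1-u)^{k+t-1}}{(x-u)^{k+t}}\,du$. -/
open MeasureTheory

/-- `Q_{k,t}(x) = ∫_{-∞}^∞ 2^{2t} dw / ((x + √(x²-1) cosh w)^{k-t} (x+1+√(x²-1) eʷ)^{2t})`. -/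
noncomputable def Qkt (k t : ℕ) (x : ℝ) : ℝ :=
  ∫ w : ℝ, (2 : ℝ) ^ (2 * t) /
    ((x + Real.sqrt (x ^ 2 - 1) * Real.cosh w) ^ (k - t) *
      (x + 1 + Real.sqrt (x ^ 2 - 1) * Real.exp w) ^ (2 * t))

/-- Substitution `v = c·eʷ` mapping `ℝ` onto `(0,∞)`. -/
lemma subExp (c : ℝ) (hc : 0 < c) (g : ℝ → ℝ) :
    ∫ v in Set.Ioi (0:ℝ), g v = ∫ w : ℝ, (c * Real.exp w) * g (c * Real.exp w) := by
  have himg : (fun w => c * Real.exp w) '' Set.univ = Set.Ioi 0 := by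
    ext v
    simp only [Set.image_univ, Set.mem_range, Set.mem_Ioi]
    constructor
    · rintro ⟨w, rfl⟩; positivity
    · intro hv
      refine ⟨Real.log (v / c), ?_⟩
      rw [Real.exp_log (by positivity)]
      field_simp
  have hderiv : ∀ w ∈ Set.univ, HasDerivWithinAt (fun w => c * Real.exp w)
      (c * Real.exp w) Set.univ w :=
    fun w _ => ((Real.hasDerivAt_exp w).const_mul c).hasDerivWithinAt
  have hinj : Set.InjOn (fun w => c * Real.exp w) Set.univ := by
    intro w₁ _ w₂ _ h
    exact Real.exp_injective (mul_left_cancel₀ (ne_of_gt hc) h)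
  rw [← himg, integral_image_eq_integral_abs_deriv_smul MeasurableSet.univ hderiv hinj g,
    setIntegral_univ]
  congr 1; funext w
  rw [abs_of_pos (by positivity), smul_eq_mul]

/-- Substitution `u = (v-1)/(v+1)` mapping `(0,∞)` onto `(-1,1)`. -/
lemma subMobius (g : ℝ → ℝ) :
    ∫ u in Set.Ioo (-1:ℝ) 1, g u
      = ∫ v in Set.Ioi (0:ℝ), (2/(v+1)^2) * g ((v-1)/(v+1)) := by
  have himg : (fun v => (v-1)/(v+1)) '' Set.Ioi 0 = Set.Ioo (-1:ℝ) 1 := by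
    ext u
    simp only [Set.mem_image, Set.mem_Ioi, Set.mem_Ioo]
    constructor
    · rintro ⟨v, hv, rfl⟩
      have hv1 : (0:ℝ) < v + 1 := by linarith
      constructor
      · rw [lt_div_iff₀ hv1]; linarith
      · rw [div_lt_one hv1]; linarith
    · rintro ⟨h1, h2⟩
      refine ⟨(1+u)/(1-u), div_pos (by linarith) (by linarith), ?_⟩
      have h1u : (0:ℝ) < 1 - u := by linarith
      field_simp
      ring
  have hderiv : ∀ v ∈ Set.Ioi (0:ℝ), HasDerivWithinAt (fun v => (v-1)/(v+1))
      (2/(v+1)^2) (Set.Ioi 0) v := by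
    intro v hv
    have hv1 : (v:ℝ) + 1 ≠ 0 := by simp only [Set.mem_Ioi] at hv; nlinarith
    have : HasDerivAt (fun v : ℝ => (v-1)/(v+1))
        ((1*(v+1) - (v-1)*1)/(v+1)^2) v :=
      ((hasDerivAt_id v).sub_const 1).div ((hasDerivAt_id v).add_const 1) hv1
    rw [show (2:ℝ)/(v+1)^2 = (1*(v+1) - (v-1)*1)/(v+1)^2 by ring]
    exact this.hasDerivWithinAt
  have hinj : Set.InjOn (fun v : ℝ => (v-1)/(v+1)) (Set.Ioi 0) := by
    intro v₁ h₁ v₂ h₂ h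
    simp only [Set.mem_Ioi] at h₁ h₂
    have e₁ : (v₁:ℝ) + 1 ≠ 0 := by nlinarith
    have e₂ : (v₂:ℝ) + 1 ≠ 0 := by nlinarith
    field_simp at h
    nlinarith [h]
  rw [← himg, integral_image_eq_integral_abs_deriv_smul measurableSet_Ioi hderiv hinj g]
  refine setIntegral_congr_fun measurableSet_Ioi fun v hv => ?_
  simp only [Set.mem_Ioi] at hv
  rw [abs_of_pos (by positivity), smul_eq_mul]

/-- Pointwise algebraic identity for the substitution `v = (b/a)·e`. -/
lemma alg1 (t m : ℕ) (x a b e : ℝ) (ha : 0 < a) (hb : 0 < b) (he : 0 < e)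
    (ha2 : a^2 = x - 1) (hb2 : b^2 = x + 1) :
    (2:ℝ) ^ (2*t) / ((x + a*b*((e + e⁻¹)/2)) ^ (m+1) * (x + 1 + a*b*e) ^ (2*t))
    = ((b/a)*e) * ((2:ℝ) ^ (2*t+m+1) * ((b/a)*e) ^ m /
        (((x-1)*((b/a)*e) + (x+1)) ^ (2*t+m+1) * (((b/a)*e)+1) ^ (m+1))) := by
  have e3 : x - 1 = a^2 := ha2.symm
  have e2 : x + 1 = b^2 := hb2.symm
  have e1 : x = (a^2+b^2)/2 := by rw [ha2, hb2]; ring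
  rw [e3, e2, e1]
  have hA : 0 < a*e + b := by positivity
  have hB : 0 < b*e + a := by positivity
  have F1 : (a^2+b^2)/2 + a*b*((e + e⁻¹)/2) = (a*e+b)*(b*e+a)/(2*e) := by
    field_simp; ring
  have F2 : b^2 + a*b*e = b*(a*e+b) := by ring
  have F3 : a^2*((b/a)*e) + b^2 = b*(a*e+b) := by field_simp
  have F4 : (b/a)*e + 1 = (b*e+a)/a := by field_simp
  rw [F1, F2, F3, F4]
  simp only [mul_pow, div_pow]
  field_simp
  ring

/-- Pointwise algebraic identity for the substitution `u = (v-1)/(v+1)`. -/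
lemma alg2 (t m : ℕ) (x v : ℝ) (hx : 1 < x) (hv : 0 < v) :
    ((2:ℝ)^m)⁻¹ * (2/(v+1)^2 * ((1 + (v-1)/(v+1)) ^ m * (1 - (v-1)/(v+1)) ^ (2*t+m) /
        (x - (v-1)/(v+1)) ^ (2*t+m+1)))
    = (2:ℝ) ^ (2*t+m+1) * v ^ m / (((x-1)*v + (x+1)) ^ (2*t+m+1) * (v+1) ^ (m+1)) := by
  have hv1 : (0:ℝ) < v + 1 := by linarith
  have hD : 0 < (x-1)*v + (x+1) := by nlinarith
  have G1 : 1 + (v-1)/(v+1) = 2*v/(v+1) := by field_simp; ring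
  have G2 : 1 - (v-1)/(v+1) = 2/(v+1) := by field_simp; ring
  have G3 : x - (v-1)/(v+1) = ((x-1)*v + (x+1))/(v+1) := by field_simp; ring
  rw [G1, G2, G3]
  simp only [mul_pow, div_pow]
  field_simp
  ring

/-- For `0 ≤ t ≤ k-1` and `x > 1`,
`Q_{k,t}(x) = 2^{-k+t+1} ∫_{-1}^1 (1+u)^{k-t-1}(1-u)^{k+t-1}/(x-u)^{k+t} du`. -/
theorem statement2 (k t : ℕ) (hk : 1 ≤ k) (ht : t ≤ k - 1) (x : ℝ) (hx : 1 < x) :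
    Qkt k t x = (2 : ℝ) ^ ((t : ℤ) + 1 - (k : ℤ)) *
      ∫ u in (-1 : ℝ)..1, (1 + u) ^ (k - t - 1) * (1 - u) ^ (k + t - 1) / (x - u) ^ (k + t) := by
  obtain ⟨m, rfl⟩ : ∃ m, k = t + 1 + m := ⟨k - t - 1, by omega⟩
  have ha : 0 < Real.sqrt (x - 1) := Real.sqrt_pos.2 (by linarith)
  have hb : 0 < Real.sqrt (x + 1) := Real.sqrt_pos.2 (by linarith)
  set a := Real.sqrt (x - 1) with ha_def
  set b := Real.sqrt (x + 1) with hb_def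
  have ha2 : a ^ 2 = x - 1 := Real.sq_sqrt (by linarith)
  have hb2 : b ^ 2 = x + 1 := Real.sq_sqrt (by linarith)
  have hs : Real.sqrt (x ^ 2 - 1) = a * b := by
    rw [ha_def, hb_def, ← Real.sqrt_mul (by linarith : (0:ℝ) ≤ x - 1)]
    congr 1; ring
  set g : ℝ → ℝ := fun v => (2:ℝ) ^ (2*t+m+1) * v ^ m /
      (((x-1)*v + (x+1)) ^ (2*t+m+1) * (v+1) ^ (m+1)) with hg
  -- Step 1: `Qkt = ∫_{(0,∞)} g`
  have step1 : Qkt (t+1+m) t x = ∫ v in Set.Ioi (0:ℝ), g v := by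
    rw [subExp (b/a) (by positivity) g]
    unfold Qkt
    congr 1; funext w
    rw [show t+1+m - t = m + 1 from by omega, hs, Real.cosh_eq, Real.exp_neg]
    exact alg1 t m x a b (Real.exp w) ha hb (Real.exp_pos w) ha2 hb2
  -- Step 2: the right-hand side equals `∫_{(0,∞)} g` as well
  have step2 : (2 : ℝ) ^ ((t : ℤ) + 1 - ((t+1+m : ℕ) : ℤ)) *
      ∫ u in (-1 : ℝ)..1, (1 + u) ^ (t+1+m - t - 1) * (1 - u) ^ (t+1+m + t - 1) /
        (x - u) ^ (t+1+m + t) = ∫ v in Set.Ioi (0:ℝ), g v := by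
    rw [show t+1+m - t - 1 = m from by omega, show t+1+m + t - 1 = 2*t+m from by omega,
      show t+1+m + t = 2*t+m+1 from by omega,
      show ((t : ℤ) + 1 - ((t+1+m : ℕ) : ℤ)) = -(m:ℤ) from by push_cast; ring,
      zpow_neg, zpow_natCast,
      intervalIntegral.integral_of_le (by norm_num : (-1:ℝ) ≤ 1),
      integral_Ioc_eq_integral_Ioo,
      subMobius (fun u => (1 + u) ^ m * (1 - u) ^ (2*t+m) / (x - u) ^ (2*t+m+1)),
      ← MeasureTheory.integral_const_mul]
    refine setIntegral_congr_fun measurableSet_Ioi fun v hv => ?_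
    simp only [Set.mem_Ioi] at hv
    exact alg2 t m x v hx hv
  rw [step1, step2]
end

section
/- For integers $0 \le t \le k-1$ and real $x>1$, $Q_{k,t}(x) = 2 Q_{k-t-1}^{(0,2t)}(x)$, where $Q_n^{(\alpha,\beta)}$ is the Jacobi function of the second kind. -/
open MeasureTheory

/-- The Jacobi function of the second kind
`Q_n^{(α,β)}(x) = (2^{-n-1}/((x-1)^α (x+1)^β)) ∫_{-1}^1 (1-u)^{n+α}(1+u)^{n+β}/(x-u)^{n+1} du`. -/
noncomputable def jacobiQ (n α β : ℕ) (x : ℝ) : ℝ :=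
  (2 : ℝ) ^ (-(n : ℤ) - 1) / ((x - 1) ^ α * (x + 1) ^ β) *
    ∫ u in (-1 : ℝ)..1, (1 - u) ^ (n + α) * (1 + u) ^ (n + β) / (x - u) ^ (n + 1)

section aux

variable (a s : ℝ)

private lemma phi_deriv (ha : 0 < a) (hs : 0 < s) (w : ℝ) :
    HasDerivAt (fun w => (a - s * Real.exp w) / (a + s * Real.exp w))
      (-(2 * a * s * Real.exp w) / (a + s * Real.exp w) ^ 2) w := by
  have hE := Real.hasDerivAt_exp w
  have h1 : HasDerivAt (fun w => a - s * Real.exp w) (-(s * Real.exp w)) w :=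
    (hE.const_mul s).const_sub a
  have h2 : HasDerivAt (fun w => a + s * Real.exp w) (s * Real.exp w) w :=
    (hE.const_mul s).const_add a
  have hpos : 0 < a + s * Real.exp w := by
    have := Real.exp_pos w; nlinarith
  have := h1.div h2 hpos.ne'
  exact this.congr_deriv (by ring)

private lemma phi_range (ha : 0 < a) (hs : 0 < s) :
    Set.range (fun w => (a - s * Real.exp w) / (a + s * Real.exp w)) = Set.Ioo (-1 : ℝ) 1 := by
  ext u
  simp only [Set.mem_range, Set.mem_Ioo]
  constructor
  · rintro ⟨w, rfl⟩
    have hE : 0 < Real.exp w := Real.exp_pos w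
    have hd : 0 < a + s * Real.exp w := by nlinarith
    constructor
    · rw [neg_lt, ← neg_div, div_lt_one hd]; nlinarith
    · rw [div_lt_one hd]; nlinarith
  · rintro ⟨h1, h2⟩
    have h1' : 0 < 1 + u := by linarith
    have h2' : 0 < 1 - u := by linarith
    refine ⟨Real.log (a * (1 - u) / ((1 + u) * s)), ?_⟩
    rw [Real.exp_log (by positivity)]
    have hkey : s * (a * (1 - u) / ((1 + u) * s)) = a * (1 - u) / (1 + u) := by
      field_simp
    rw [hkey]
    have hnum : a - a * (1 - u) / (1 + u) = 2 * a * u / (1 + u) := by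
      field_simp; ring
    have hden : a + a * (1 - u) / (1 + u) = 2 * a / (1 + u) := by
      field_simp; ring
    rw [hnum, hden]
    field_simp

private lemma phi_inj (ha : 0 < a) (hs : 0 < s) :
    Function.Injective (fun w => (a - s * Real.exp w) / (a + s * Real.exp w)) := by
  intro w1 w2 h
  simp only at h
  have hE1 : 0 < Real.exp w1 := Real.exp_pos w1
  have hE2 : 0 < Real.exp w2 := Real.exp_pos w2
  have hd1 : 0 < a + s * Real.exp w1 := by nlinarith
  have hd2 : 0 < a + s * Real.exp w2 := by nlinarith
  rw [div_eq_div_iff hd1.ne' hd2.ne'] at h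
  have : Real.exp w1 = Real.exp w2 := by
    have has : (2 * a * s) ≠ 0 := by positivity
    apply mul_left_cancel₀ has
    linear_combination -h
  exact Real.exp_injective this

private lemma chvar (ha : 0 < a) (hs : 0 < s) (g : ℝ → ℝ) :
    ∫ u in Set.Ioo (-1 : ℝ) 1, g u
      = ∫ w : ℝ, |(-(2 * a * s * Real.exp w) / (a + s * Real.exp w) ^ 2)| *
          g ((a - s * Real.exp w) / (a + s * Real.exp w)) := by
  have h := integral_image_eq_integral_abs_deriv_smul (s := Set.univ) MeasurableSet.univ
      (f := fun w => (a - s * Real.exp w) / (a + s * Real.exp w))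
      (f' := fun w => -(2 * a * s * Real.exp w) / (a + s * Real.exp w) ^ 2)
      (fun w _ => (phi_deriv a s ha hs w).hasDerivWithinAt) ((phi_inj a s ha hs).injOn) g
  rw [Set.image_univ, phi_range a s ha hs] at h
  simpa [smul_eq_mul] using h

end aux

/-- For `0 ≤ t ≤ k-1` and `x > 1`, `Q_{k,t}(x) = 2 Q_{k-t-1}^{(0,2t)}(x)`. -/
theorem statement3 (k t : ℕ) (hk : 1 ≤ k) (ht : t ≤ k - 1) (x : ℝ) (hx : 1 < x) :
    Qkt k t x = 2 * jacobiQ (k - t - 1) 0 (2 * t) x := by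
  have hts : t + 1 ≤ k := by omega
  set n := k - t - 1 with hndef
  have hm : k - t = n + 1 := by omega
  have hx2 : (0:ℝ) ≤ x ^ 2 - 1 := by nlinarith
  set s := Real.sqrt (x ^ 2 - 1) with hsdef
  have hs2 : s ^ 2 = x ^ 2 - 1 := Real.sq_sqrt hx2
  have hs : 0 < s := Real.sqrt_pos.mpr (by nlinarith)
  have ha : (0:ℝ) < x + 1 := by linarith
  rw [Qkt, jacobiQ, hm]
  rw [intervalIntegral.integral_of_le (by norm_num : (-1:ℝ) ≤ 1)]
  rw [MeasureTheory.integral_Ioc_eq_integral_Ioo]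
  rw [chvar (x + 1) s ha hs]
  rw [← mul_assoc, ← MeasureTheory.integral_const_mul]
  congr 1
  funext w
  have hE : 0 < Real.exp w := Real.exp_pos w
  have hsE : 0 < s * Real.exp w := mul_pos hs hE
  have hA : 0 < x + 1 + s * Real.exp w := by linarith
  have hB : 0 < x - 1 + s * Real.exp w := by linarith
  have habs : |(-(2 * (x + 1) * s * Real.exp w) / (x + 1 + s * Real.exp w) ^ 2)|
      = 2 * ((x + 1) * (s * Real.exp w)) / (x + 1 + s * Real.exp w) ^ 2 := by
    rw [abs_div, abs_neg, abs_of_pos (by nlinarith), abs_of_pos (by positivity)]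
    ring
  have hphi1 : 1 - (x + 1 - s * Real.exp w) / (x + 1 + s * Real.exp w)
      = 2 * (s * Real.exp w) / (x + 1 + s * Real.exp w) := by
    field_simp; ring
  have hphi2 : 1 + (x + 1 - s * Real.exp w) / (x + 1 + s * Real.exp w)
      = 2 * (x + 1) / (x + 1 + s * Real.exp w) := by
    field_simp; ring
  have hphi3 : x - (x + 1 - s * Real.exp w) / (x + 1 + s * Real.exp w)
      = (x + 1) * (x - 1 + s * Real.exp w) / (x + 1 + s * Real.exp w) := by
    field_simp; ring
  have hcosh : x + s * Real.cosh w
      = (x + 1 + s * Real.exp w) * (x - 1 + s * Real.exp w) / (2 * (s * Real.exp w)) := by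
    rw [eq_div_iff (by positivity), Real.cosh_eq, Real.exp_neg]
    field_simp
    nlinarith [hs2]
  have hzpow : (2:ℝ) ^ (-(n : ℤ) - 1) = ((2:ℝ) ^ (n + 1))⁻¹ := by
    rw [show -(n : ℤ) - 1 = -(((n + 1 : ℕ) : ℤ)) by push_cast; ring, zpow_neg, zpow_natCast]
  rw [hcosh, habs, hphi1, hphi2, hphi3, hzpow, pow_zero, one_mul, Nat.add_zero]
  set E := s * Real.exp w with hEdef
  set a := x + 1 with hadef
  set A := a + E with hAdef
  set B := x - 1 + E with hBdef
  clear_value E a A B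
  clear hEdef hadef hAdef hBdef hcosh habs hphi1 hphi2 hphi3 hs2 hsdef hndef
  have hA0 := hA.ne'
  have hB0 := hB.ne'
  have hE0 := hsE.ne'
  have ha0 := ha.ne'
  simp only [div_pow, mul_pow, Nat.add_zero]
  field_simp
  ring
end
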